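/- Let 0 ≤ D < c, and set α* = (c − D)/(D + c). Then for every α ≤ 0: D·(1 + α)² + c·(1 − α)² − (D·(1 + α*)² + c·(1 − α*)²) ≥ (c − D)²/(D + c). That is, for the square loss, whenever the rejector output has the wrong sign (rejects although D < c), the excess conditional surrogate risk is at least (c − D)²/(D + c). -/

import Mathlib

/-- Excess-risk lower bound for the square loss (key step of Theorem 5): for `0 ≤ D < c` and
`α* = (c − D)/(D + c)`, whenever the rejector output `α ≤ 0` has the wrong sign, the excess
conditional surrogate risk is at least `(c − D)²/(D + c)`. -/
theorem square_wrong_sign_excess_risk (D c : ℝ) (hD : 0 ≤ D) (hDc : D < c) :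
    ∀ α : ℝ, α ≤ 0 →
      (c - D) ^ 2 / (D + c) ≤
        D * (1 + α) ^ 2 + c * (1 - α) ^ 2 -
          (D * (1 + (c - D) / (D + c)) ^ 2 + c * (1 - (c - D) / (D + c)) ^ 2) := by
  intro α hα
  have hpos : 0 < D + c := by linarith
  rw [div_le_iff₀ hpos] at *
  field_simp
  nlinarith [mul_nonneg hpos.le (sq_nonneg ((D+c)*α - (c-D))), mul_nonneg (mul_nonneg (mul_nonneg (neg_nonneg.2 hα) (sub_nonneg.2 hDc.le)) hpos.le) hpos.le, mul_nonneg (mul_nonneg (mul_self_nonneg α) hpos.le) hpos.le]
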